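/- Let n ≥ 1 and let x_1,…,x_n be nonnegative reals with average L̄ = (Σ x_i)/n ≥ 1. Fix j and suppose x_j ≤ (α+2)·L̄ for a real α > 0. Let c > 0. Then the change in potential Φ = c·(Σ x_i²)/L̄ caused by increasing x_j by 1 (which also increases L̄ by 1/n) is at most c·(2α+5). That is, c·(Σ_{i≠j} x_i² + (x_j+1)²)/(L̄ + 1/n) − c·(Σ x_i²)/L̄ ≤ c·(2α+5). -/

import Mathlib

theorem stmt_13 (n : ℕ) (hn : 1 ≤ n) (x : Fin n → ℝ) (hx : ∀ i, 0 ≤ x i)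
    (α c Lbar : ℝ) (hα : 0 < α) (hc : 0 < c)
    (hLbar : Lbar = (∑ i, x i) / n) (hL1 : 1 ≤ Lbar)
    (j : Fin n) (hj : x j ≤ (α + 2) * Lbar) :
    c * ((∑ i ∈ Finset.univ.erase j, (x i) ^ 2) + (x j + 1) ^ 2) / (Lbar + 1 / n)
      - c * (∑ i, (x i) ^ 2) / Lbar ≤ c * (2 * α + 5) := by
  have hL : (0:ℝ) < Lbar := lt_of_lt_of_le one_pos hL1
  have hn' : (0:ℝ) < n := by exact_mod_cast Nat.pos_of_ne_zero (by omega)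
  have hE : (∑ i ∈ Finset.univ.erase j, x i ^ 2) = (∑ i, x i ^ 2) - x j ^ 2 := by
    rw [← Finset.sum_erase_add Finset.univ _ (Finset.mem_univ j)]; ring
  set S := ∑ i, x i ^ 2 with hSdef
  have hS : 0 ≤ S := Finset.sum_nonneg fun i _ => sq_nonneg _
  rw [hE]
  have hnum : (S - x j ^ 2) + (x j + 1) ^ 2 = S + 2 * x j + 1 := by ring
  rw [hnum]
  have hnumnn : 0 ≤ c * (S + 2 * x j + 1) := by nlinarith [hx j, hS, hc.le]
  have h1 : c * (S + 2 * x j + 1) / (Lbar + 1 / n) ≤ c * (S + 2 * x j + 1) / Lbar := by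
    apply div_le_div_of_nonneg_left hnumnn hL
    have : 0 < 1 / (n:ℝ) := by positivity
    linarith
  have h2 : c * (S + 2 * x j + 1) / Lbar - c * S / Lbar ≤ c * (2 * α + 5) := by
    have heq : c * (S + 2 * x j + 1) / Lbar - c * S / Lbar = c * (2 * x j + 1) / Lbar := by
      field_simp; ring
    rw [heq, div_le_iff₀ hL]
    nlinarith [mul_le_mul_of_nonneg_left hj hc.le, mul_le_mul_of_nonneg_left hL1 hc.le]
  linarith
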